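/- For any n ∈ Γ and λ ∈ 𝕋, the set A(n,λ) = {x ∈ S(c₀(Γ)) : x(n) = λ} is a maximal convex subset of the unit sphere S(c₀(Γ)). -/

import Mathlib

open ZeroAtInfty Metric

private lemma c0_apply_le_norm {Γ : Type*} [TopologicalSpace Γ] (f : C₀(Γ, ℂ)) (k : Γ) :
    ‖f k‖ ≤ ‖f‖ := by
  rw [← ZeroAtInftyContinuousMap.norm_toBCF_eq_norm]
  exact BoundedContinuousFunction.norm_coe_le_norm f.toBCF k

private lemma c0_norm_le {Γ : Type*} [TopologicalSpace Γ] (f : C₀(Γ, ℂ)) (M : ℝ) (hM : 0 ≤ M)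
    (h : ∀ k, ‖f k‖ ≤ M) : ‖f‖ ≤ M := by
  rw [← ZeroAtInftyContinuousMap.norm_toBCF_eq_norm]
  exact (BoundedContinuousFunction.norm_le hM).2 h

private lemma scalar_eq_one {z : ℂ} (hz : ‖z‖ ≤ 1) (h : ‖1 + z‖ = 2) : z = 1 := by
  have h1 : Complex.normSq (1 + z) = 4 := by
    have := Complex.sq_norm (1 + z)
    rw [h] at this; linarith [this]
  have h2 : Complex.normSq z ≤ 1 := by
    have := Complex.sq_norm z
    nlinarith [this, hz, norm_nonneg z]
  have hre : (1 + z).re = 1 + z.re := by simp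
  have him : (1 + z).im = z.im := by simp
  rw [Complex.normSq_apply, hre, him] at h1
  rw [Complex.normSq_apply] at h2
  have hr : z.re = 1 := by nlinarith
  have hi : z.im = 0 := by nlinarith
  exact Complex.ext hr hi

open Classical in
private noncomputable def bump {Γ : Type*} [TopologicalSpace Γ] [DiscreteTopology Γ]
    (n : Γ) (lam : ℂ) : C₀(Γ, ℂ) := by
  refine ⟨⟨fun k => if k = n then lam else 0, continuous_of_discreteTopology⟩, ?_⟩
  have h : ∀ᶠ k in Filter.cocompact Γ, (if k = n then lam else 0) = 0 := by
    have : ({n} : Set Γ)ᶜ ∈ Filter.cocompact Γ :=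
      (isCompact_singleton).compl_mem_cocompact
    filter_upwards [this] with k hk
    simp only [Set.mem_compl_iff, Set.mem_singleton_iff] at hk
    simp [hk]
  exact tendsto_const_nhds.congr' (h.mono fun k hk => hk.symm)

open Classical in
private lemma bump_apply {Γ : Type*} [TopologicalSpace Γ] [DiscreteTopology Γ]
    (n : Γ) (lam : ℂ) (k : Γ) : bump n lam k = if k = n then lam else 0 := rfl

/-- For `n ∈ Γ` and unimodular `λ`, the set `A(n,λ) = {x ∈ S(c₀(Γ)) : x n = λ}` is a maximal
convex subset of the unit sphere of `c₀(Γ)`. -/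
theorem A_maximal_convex {Γ : Type*} [TopologicalSpace Γ] [DiscreteTopology Γ] [Infinite Γ]
    (n : Γ) (lam : ℂ) (hlam : ‖lam‖ = 1) :
    Convex ℝ {x : C₀(Γ, ℂ) | ‖x‖ = 1 ∧ x n = lam} ∧
      ∀ C : Set C₀(Γ, ℂ), C ⊆ sphere (0 : C₀(Γ, ℂ)) 1 → Convex ℝ C →
        {x : C₀(Γ, ℂ) | ‖x‖ = 1 ∧ x n = lam} ⊆ C →
        C = {x : C₀(Γ, ℂ) | ‖x‖ = 1 ∧ x n = lam} := by
  classical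
  constructor
  · -- convexity
    rintro x ⟨hx1, hx2⟩ y ⟨hy1, hy2⟩ a b ha hb hab
    have happ : (a • x + b • y) n = lam := by
      have : (a • x + b • y) n = a • x n + b • y n := by
        simp
      rw [this, hx2, hy2, ← add_smul, hab, one_smul]
    constructor
    · refine le_antisymm ?_ ?_
      · have : ‖a • x + b • y‖ ≤ a * ‖x‖ + b * ‖y‖ := by
          calc ‖a • x + b • y‖ ≤ ‖a • x‖ + ‖b • y‖ := norm_add_le _ _
          _ = a * ‖x‖ + b * ‖y‖ := by
              have h1 : ‖a • x‖ = ‖a‖ * ‖x‖ := norm_smul a x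
              have h2 : ‖b • y‖ = ‖b‖ * ‖y‖ := norm_smul b y
              rw [h1, h2, Real.norm_of_nonneg ha, Real.norm_of_nonneg hb]
        rw [hx1, hy1] at this
        linarith
      · calc (1 : ℝ) = ‖lam‖ := hlam.symm
          _ = ‖(a • x + b • y) n‖ := by rw [happ]
          _ ≤ ‖a • x + b • y‖ := c0_apply_le_norm _ _
    · exact happ
  · -- maximality
    intro C hCsph hCconv hAC
    refine Set.Subset.antisymm ?_ hAC
    intro y hyC
    have hy1 : ‖y‖ = 1 := by
      have := hCsph hyC
      rwa [mem_sphere_iff_norm, sub_zero] at this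
    set e : C₀(Γ, ℂ) := bump n lam with he
    have he_n : e n = lam := by rw [he, bump_apply]; simp
    have he_norm : ‖e‖ = 1 := by
      refine le_antisymm (c0_norm_le _ 1 zero_le_one fun k => ?_) ?_
      · rw [he, bump_apply]
        by_cases hk : k = n <;> simp [hk, hlam]
      · calc (1 : ℝ) = ‖lam‖ := hlam.symm
          _ = ‖e n‖ := by rw [he_n]
          _ ≤ ‖e‖ := c0_apply_le_norm _ _
    have heC : e ∈ C := hAC ⟨he_norm, he_n⟩
    have hmid : (1/2 : ℝ) • e + (1/2 : ℝ) • y ∈ C :=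
      hCconv heC hyC (by norm_num) (by norm_num) (by norm_num)
    have hmid_norm : ‖(1/2 : ℝ) • e + (1/2 : ℝ) • y‖ = 1 := by
      have := hCsph hmid
      rwa [mem_sphere_iff_norm, sub_zero] at this
    have hsum : ‖e + y‖ = 2 := by
      have heq : (1/2 : ℝ) • e + (1/2 : ℝ) • y = (1/2 : ℝ) • (e + y) :=
        (smul_add (1/2 : ℝ) e y).symm
      have hns : ‖(1/2 : ℝ) • (e + y)‖ = ‖(1/2 : ℝ)‖ * ‖e + y‖ := norm_smul (1/2 : ℝ) (e + y)
      rw [heq, hns, Real.norm_of_nonneg (by norm_num : (0:ℝ) ≤ 1/2)] at hmid_norm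
      linarith
    -- pointwise bound: ‖(e+y) k‖ ≤ max ‖lam + y n‖ 1
    have hbound : ‖e + y‖ ≤ max ‖lam + y n‖ 1 := by
      refine c0_norm_le _ _ (le_trans zero_le_one (le_max_right _ _)) fun k => ?_
      have hk_val : (e + y) k = e k + y k := by simp
      by_cases hk : k = n
      · subst hk
        rw [hk_val, he_n]
        exact le_max_left _ _
      · rw [hk_val, he, bump_apply]
        simp only [hk, if_false, zero_add]
        exact le_trans (le_trans (c0_apply_le_norm y k) hy1.le) (le_max_right _ _)
    have hln : ‖lam + y n‖ = 2 := by
      have h2 : (2 : ℝ) ≤ max ‖lam + y n‖ 1 := hsum ▸ hbound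
      have h3 : (2 : ℝ) ≤ ‖lam + y n‖ := by
        rcases max_cases ‖lam + y n‖ 1 with ⟨hm, _⟩ | ⟨hm, _⟩
        · rwa [hm] at h2
        · rw [hm] at h2; linarith
      have h4 : ‖lam + y n‖ ≤ 2 := by
        calc ‖lam + y n‖ ≤ ‖lam‖ + ‖y n‖ := norm_add_le _ _
          _ ≤ 1 + 1 := by
              rw [hlam]
              exact add_le_add_right (le_trans (c0_apply_le_norm y n) hy1.le) 1
          _ = 2 := by norm_num
      linarith
    -- deduce y n = lam
    have hlam0 : lam ≠ 0 := by intro h0; rw [h0, norm_zero] at hlam; norm_num at hlam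
    set z : ℂ := lam⁻¹ * y n with hz
    have hz_norm : ‖z‖ ≤ 1 := by
      rw [hz, norm_mul, norm_inv, hlam, inv_one, one_mul]
      exact le_trans (c0_apply_le_norm y n) hy1.le
    have hfac : lam * (1 + z) = lam + y n := by
      rw [hz, mul_add, mul_one, ← mul_assoc, mul_inv_cancel₀ hlam0, one_mul]
    have h1z : ‖1 + z‖ = 2 := by
      have : ‖lam * (1 + z)‖ = ‖lam‖ * ‖1 + z‖ := norm_mul _ _
      rw [hfac, hln, hlam, one_mul] at this
      linarith
    have hz1 : z = 1 := scalar_eq_one hz_norm h1z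
    have : y n = lam := by
      have := congrArg (lam * ·) hz1
      simp only [hz] at this
      rw [← mul_assoc, mul_inv_cancel₀ hlam0, one_mul, mul_one] at this
      exact this
    exact ⟨hy1, this⟩
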